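/- Let Z ~ Multinomial(N, p) with N = n·rₙ, p a positive probability vector on {1,…,n}. Then E[∏ᵢ (Zᵢ/pᵢ)^{Zᵢ}] ≤ √(2πeN)·N^{N}·exp{n·Δ(rₙ)}, where Δ(r) = inf_{q>2} {(1−1/q)·Ψ(r) + (1/q)·log[1 + (2π)^{−q/2}ζ(q/2)]} and Ψ(t) = (1+t)log(1+t) − t·log t. -/

import Mathlib

open Real

/-- `Ψ(t) = (1+t)log(1+t) − t·log t`. -/
noncomputable def Psi (t : ℝ) : ℝ := (1 + t) * Real.log (1 + t) - t * Real.log t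

/-- Riemann's zeta function for real arguments, `ζ(s) = ∑_{j=1}^∞ j^{-s}`. -/
noncomputable def zetaReal (s : ℝ) : ℝ := ∑' j : ℕ, ((j : ℝ) + 1) ^ (-s)

/-- `Δ(r) = inf_{q>2} {(1−1/q)·Ψ(r) + (1/q)·log[1 + (2π)^{−q/2}ζ(q/2)]}`. -/
noncomputable def Delta (r : ℝ) : ℝ :=
  sInf {x : ℝ | ∃ q : ℝ, 2 < q ∧
    x = (1 - 1/q) * Psi r + (1/q) * Real.log (1 + (2 * π) ^ (-q/2) * zetaReal (q/2))}

/- ### Auxiliary lemmas -/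

lemma sqrtpi_le_stirlingSeq (m : ℕ) : Real.sqrt π ≤ Stirling.stirlingSeq (m + 1) := by
  apply le_of_tendsto Stirling.tendsto_stirlingSeq_sqrt_pi
  filter_upwards [Filter.eventually_ge_atTop (m + 1)] with k hk
  obtain ⟨j, rfl⟩ := Nat.exists_eq_add_of_le hk
  have := Stirling.stirlingSeq'_antitone (Nat.le_add_right m j)
  simpa [Function.comp, Nat.succ_eq_add_one, show m + j + 1 = m + 1 + j by ring] using this

lemma stirlingSeq_le_e_div_sqrt2 (m : ℕ) : Stirling.stirlingSeq (m + 1) ≤ exp 1 / Real.sqrt 2 := by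
  have := Stirling.stirlingSeq'_antitone (Nat.zero_le m)
  simpa [Function.comp, Stirling.stirlingSeq_one] using this

lemma factorial_stirling_lower (m : ℕ) :
    Real.sqrt (2 * π * (m+1)) * (((m:ℝ)+1) / exp 1) ^ (m+1) ≤ ((m+1).factorial : ℝ) := by
  have h := sqrtpi_le_stirlingSeq m
  rw [Stirling.stirlingSeq, le_div_iff₀ (by positivity)] at h
  calc Real.sqrt (2 * π * (m+1)) * (((m:ℝ)+1) / exp 1) ^ (m+1)
      = Real.sqrt π * (Real.sqrt (2 * ((m:ℕ)+1)) * ((((m:ℕ):ℝ)+1) / exp 1) ^ (m+1)) := by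
        rw [show 2 * π * ((m:ℝ)+1) = π * (2 * ((m:ℝ)+1)) by ring, Real.sqrt_mul pi_pos.le]
        ring
    _ ≤ ((m+1).factorial : ℝ) := by
        exact_mod_cast h

lemma factorial_stirling_upper (m : ℕ) :
    (((m+1).factorial) : ℝ) ≤ exp 1 * Real.sqrt (m+1) * (((m:ℝ)+1) / exp 1) ^ (m+1) := by
  have h := stirlingSeq_le_e_div_sqrt2 m
  rw [Stirling.stirlingSeq, div_le_div_iff₀ (by positivity) (by positivity)] at h
  have h2 : Real.sqrt (2 * ((m:ℝ)+1)) = Real.sqrt 2 * Real.sqrt ((m:ℝ)+1) :=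
    Real.sqrt_mul (by norm_num) _
  have hs2 : (0:ℝ) < Real.sqrt 2 := by positivity
  push_cast at h
  rw [h2] at h
  have h' : ((m+1).factorial : ℝ) * Real.sqrt 2
      ≤ (exp 1 * Real.sqrt ((m:ℝ)+1) * (((m:ℝ)+1) / exp 1) ^ (m+1)) * Real.sqrt 2 := by
    push_cast
    linarith [h]
  exact le_of_mul_le_mul_right h' hs2

noncomputable def aAux (k : ℕ) : ℝ := (k:ℝ)^k * Real.exp (-(k:ℝ)) / (k.factorial : ℝ)

lemma aAux_pos (k : ℕ) : 0 < aAux k := by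
  cases k with
  | zero => norm_num [aAux]
  | succ m =>
    unfold aAux
    positivity

lemma aAux_zero : aAux 0 = 1 := by norm_num [aAux]

lemma pow_div_exp (m : ℕ) : (((m:ℝ)) / exp 1) ^ m = (m:ℝ)^m * Real.exp (-(m:ℝ)) := by
  rw [div_pow, Real.exp_neg, div_eq_mul_inv]
  congr 1
  rw [← Real.exp_nat_mul, mul_one]

lemma aAux_le (m : ℕ) : aAux (m+1) ≤ 1 / Real.sqrt (2 * π * ((m:ℝ)+1)) := by
  have hf : (0:ℝ) < ((m+1).factorial : ℝ) := by positivity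
  have hs : (0:ℝ) < Real.sqrt (2 * π * ((m:ℝ)+1)) := by positivity
  rw [aAux, div_le_div_iff₀ hf hs, one_mul]
  have := factorial_stirling_lower m
  calc ((m+1:ℕ):ℝ)^(m+1) * Real.exp (-((m+1:ℕ):ℝ)) * Real.sqrt (2 * π * ((m:ℝ)+1))
      = Real.sqrt (2 * π * ((m:ℝ)+1)) * ((((m:ℝ)+1)) / exp 1) ^ (m+1) := by
        rw [show ((m:ℝ)+1) = ((m+1:ℕ):ℝ) by push_cast; ring, pow_div_exp (m+1)]; ring
    _ ≤ ((m+1).factorial : ℝ) := this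

lemma box_bound {n N : ℕ} (g : ℕ → ℝ) (hg : ∀ k, 0 ≤ g k) :
    ∑ z ∈ Finset.Nat.antidiagonalTuple n N, ∏ i, g (z i)
      ≤ (∑ k ∈ Finset.range (N+1), g k) ^ n := by
  have hsub : Finset.Nat.antidiagonalTuple n N
      ⊆ Fintype.piFinset (fun _ : Fin n => Finset.range (N+1)) := by
    intro z hz
    rw [Fintype.mem_piFinset]
    intro i
    rw [Finset.mem_range, Nat.lt_succ_iff]
    rw [Finset.Nat.mem_antidiagonalTuple] at hz
    exact hz ▸ Finset.single_le_sum (fun _ _ => Nat.zero_le _) (Finset.mem_univ i)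
  calc ∑ z ∈ Finset.Nat.antidiagonalTuple n N, ∏ i, g (z i)
      ≤ ∑ z ∈ Fintype.piFinset (fun _ : Fin n => Finset.range (N+1)), ∏ i, g (z i) :=
        Finset.sum_le_sum_of_subset_of_nonneg hsub
          (fun z _ _ => Finset.prod_nonneg fun i _ => hg _)
    _ = ∏ _i : Fin n, ∑ k ∈ Finset.range (N+1), g k :=
        Finset.sum_prod_piFinset _ _
    _ = (∑ k ∈ Finset.range (N+1), g k) ^ n := by
        rw [Finset.prod_const, Finset.card_univ, Fintype.card_fin]

lemma card_antidiagonalTuple_le (n r : ℕ) (hr : 1 ≤ r) :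
    ((Finset.Nat.antidiagonalTuple n (n * r)).card : ℝ) ≤ Real.exp (n * Psi r) := by
  set N := n * r with hN
  have hR : (1:ℝ) ≤ (r:ℝ) := by exact_mod_cast hr
  have hR0 : (0:ℝ) < (r:ℝ) := by linarith
  have hR1 : (0:ℝ) < 1 + (r:ℝ) := by linarith
  set θ : ℝ := (r:ℝ) / (1 + r) with hθdef
  have hθ0 : 0 < θ := by positivity
  have hθ1 : θ < 1 := by
    rw [hθdef, div_lt_one hR1]; linarith
  have hθN : 0 < θ ^ N := pow_pos hθ0 N
  have key : ((Finset.Nat.antidiagonalTuple n N).card : ℝ) * θ ^ N ≤ ((1 - θ)⁻¹) ^ n := by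
    have h1 : ((Finset.Nat.antidiagonalTuple n N).card : ℝ) * θ ^ N
        = ∑ z ∈ Finset.Nat.antidiagonalTuple n N, ∏ i, θ ^ (z i) := by
      rw [Finset.sum_congr rfl (fun z hz => ?_), Finset.sum_const, nsmul_eq_mul]
      rw [Finset.prod_pow_eq_pow_sum]
      rw [Finset.Nat.mem_antidiagonalTuple] at hz
      rw [hz]
    rw [h1]
    calc ∑ z ∈ Finset.Nat.antidiagonalTuple n N, ∏ i, θ ^ (z i)
        ≤ (∑ k ∈ Finset.range (N+1), θ ^ k) ^ n :=
          box_bound _ (fun k => by positivity)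
      _ ≤ ((1 - θ)⁻¹) ^ n := by
          apply pow_le_pow_left₀ (Finset.sum_nonneg fun k _ => by positivity)
          rw [← tsum_geometric_of_lt_one hθ0.le hθ1]
          exact Summable.sum_le_tsum _ (fun k _ => by positivity)
            (summable_geometric_of_lt_one hθ0.le hθ1)
  have h2 : ((1 - θ)⁻¹) ^ n / θ ^ N = Real.exp (n * Psi r) := by
    have h1θ : 1 - θ = (1 + (r:ℝ))⁻¹ := by
      rw [hθdef]; field_simp; ring
    have hlog : Real.log ((1 + (r:ℝ)) / (r:ℝ)) = Real.log (1 + r) - Real.log r :=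
      Real.log_div (by positivity) (by positivity)
    rw [h1θ, inv_inv]
    have hθinv : θ ^ N = ((r:ℝ) / (1 + r)) ^ N := by rw [hθdef]
    rw [hθinv, Psi]
    rw [show ((n:ℝ)) * ((1 + (r:ℝ)) * Real.log (1 + (r:ℝ)) - (r:ℝ) * Real.log (r:ℝ))
        = (n:ℝ) * Real.log (1 + (r:ℝ)) + ((n * r : ℕ):ℝ) * (Real.log (1 + (r:ℝ)) - Real.log (r:ℝ)) by
      push_cast; ring]
    rw [Real.exp_add, ← hlog]
    rw [← Real.log_pow, Real.exp_log (by positivity), ← Real.log_rpow (by positivity),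
      Real.exp_log (Real.rpow_pos_of_pos (by positivity) _)]
    rw [Real.rpow_natCast, div_eq_iff (by positivity), div_pow, ← hN]
    field_simp
    rw [← mul_pow]; congr 1; field_simp
  rw [← h2, le_div_iff₀ hθN]
  exact key

lemma zeta_summable {s : ℝ} (hs : 1 < s) : Summable (fun j : ℕ => ((j : ℝ) + 1) ^ (-s)) := by
  have h : Summable (fun n : ℕ => (n : ℝ) ^ (-s)) :=
    Real.summable_nat_rpow.mpr (by linarith)
  have := (summable_nat_add_iff (f := fun n : ℕ => (n : ℝ) ^ (-s)) 1).mpr h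
  simpa [Nat.cast_add, Nat.cast_one] using this

lemma zeta_nonneg (s : ℝ) : 0 ≤ zetaReal s :=
  tsum_nonneg fun j => Real.rpow_nonneg (by positivity) _

lemma zeta_partial_le {s : ℝ} (hs : 1 < s) (m : ℕ) :
    ∑ k ∈ Finset.range m, ((k : ℝ) + 1) ^ (-s) ≤ zetaReal s :=
  Summable.sum_le_tsum _ (fun k _ => Real.rpow_nonneg (by positivity) _) (zeta_summable hs)

lemma exp_rpow' (a b : ℝ) : (Real.exp a) ^ b = Real.exp (a * b) := by
  rw [Real.rpow_def_of_pos (Real.exp_pos a), Real.log_exp]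

lemma aAux_rpow_le {q : ℝ} (hq : 0 ≤ q) (m : ℕ) :
    (aAux (m+1)) ^ q ≤ (2*π) ^ (-q/2) * (((m:ℝ)+1)) ^ (-q/2) := by
  have hx : (0:ℝ) ≤ 2 * π * ((m:ℝ)+1) := by positivity
  have h1 : (aAux (m+1)) ^ q ≤ (1 / Real.sqrt (2 * π * ((m:ℝ)+1))) ^ q :=
    Real.rpow_le_rpow (aAux_pos _).le (aAux_le m) hq
  calc (aAux (m+1)) ^ q ≤ (1 / Real.sqrt (2 * π * ((m:ℝ)+1))) ^ q := h1
    _ = ((2 * π * ((m:ℝ)+1)) ^ (-(1/2) : ℝ)) ^ q := by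
        rw [one_div, Real.sqrt_eq_rpow, ← Real.rpow_neg hx]
    _ = (2 * π * ((m:ℝ)+1)) ^ (-q/2) := by
        rw [← Real.rpow_mul hx]
        congr 1
        ring
    _ = (2*π) ^ (-q/2) * (((m:ℝ)+1)) ^ (-q/2) := Real.mul_rpow (by positivity) (by positivity)

lemma g_sum_le {q : ℝ} (hq : 2 < q) (N : ℕ) :
    ∑ k ∈ Finset.range (N+1), (aAux k) ^ q ≤ 1 + (2*π) ^ (-q/2) * zetaReal (q/2) := by
  rw [Finset.sum_range_succ']
  have h0 : (aAux 0) ^ q = 1 := by rw [aAux_zero, Real.one_rpow]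
  rw [h0]
  rw [add_comm (∑ k ∈ Finset.range N, (aAux (k+1)) ^ q) 1]
  gcongr 1 + ?_
  calc ∑ k ∈ Finset.range N, (aAux (k+1)) ^ q
      ≤ ∑ k ∈ Finset.range N, (2*π) ^ (-q/2) * (((k:ℝ)+1)) ^ (-q/2) :=
        Finset.sum_le_sum fun k _ => aAux_rpow_le (by linarith) k
    _ = (2*π) ^ (-q/2) * ∑ k ∈ Finset.range N, (((k:ℝ)+1)) ^ (-(q/2)) := by
        rw [Finset.mul_sum]; congr 1; ext k; rw [neg_div]
    _ ≤ (2*π) ^ (-q/2) * zetaReal (q/2) := by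
        have := zeta_partial_le (show 1 < q/2 by linarith) N
        have h2 : (0:ℝ) ≤ (2*π) ^ (-q/2) := Real.rpow_nonneg (by positivity) _
        exact mul_le_mul_of_nonneg_left this h2
lemma main_q (n r : ℕ) (hn : 1 ≤ n) (hr : 1 ≤ r) {q : ℝ} (hq : 2 < q) :
    ∑ z ∈ Finset.Nat.antidiagonalTuple n (n*r), ∏ i, aAux (z i)
      ≤ Real.exp (n * ((1 - 1/q) * Psi r
          + (1/q) * Real.log (1 + (2*π) ^ (-q/2) * zetaReal (q/2)))) := by
  set N := n * r with hN
  set F := Finset.Nat.antidiagonalTuple n N with hF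
  have hq1 : (1:ℝ) ≤ q := by linarith
  have hq0 : (0:ℝ) < q := by linarith
  -- F is nonempty
  have hFne : F.Nonempty := by
    refine ⟨fun _ => r, ?_⟩
    rw [hF, Finset.Nat.mem_antidiagonalTuple]
    simp [Finset.sum_const, Finset.card_univ, mul_comm]; rfl
  have hc0 : (0:ℝ) < (F.card : ℝ) :=
    Nat.cast_pos.mpr (Finset.card_pos.mpr hFne)
  set c : ℝ := (F.card : ℝ) with hc
  set A : ℝ := ∑ z ∈ F, ∏ i, aAux (z i) with hA
  set B : ℝ := ∑ z ∈ F, (∏ i, aAux (z i)) ^ q with hB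
  have hbnn : ∀ z : Fin n → ℕ, 0 ≤ ∏ i, aAux (z i) :=
    fun z => Finset.prod_nonneg fun i _ => (aAux_pos _).le
  have hA0 : 0 ≤ A := Finset.sum_nonneg fun z _ => hbnn z
  have hB0 : 0 ≤ B := Finset.sum_nonneg fun z _ => Real.rpow_nonneg (hbnn z) q
  -- Jensen
  have jensen : (A / c) ^ q ≤ B / c := by
    have := Real.rpow_arith_mean_le_arith_mean_rpow F (fun _ => 1/c)
      (fun z => ∏ i, aAux (z i)) (fun _ _ => by positivity)
      (by rw [Finset.sum_const, nsmul_eq_mul, ← hc]; field_simp)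
      (fun z _ => hbnn z) hq1
    calc (A / c) ^ q = (∑ z ∈ F, (1/c) * (∏ i, aAux (z i))) ^ q := by
          rw [← Finset.mul_sum, ← hA, one_div, inv_mul_eq_div]
      _ ≤ ∑ z ∈ F, (1/c) * (∏ i, aAux (z i)) ^ q := this
      _ = B / c := by rw [← Finset.mul_sum, ← hB, one_div, inv_mul_eq_div]
  -- B bound
  set s : ℝ := 1 + (2*π) ^ (-q/2) * zetaReal (q/2) with hs
  have hs1 : (1:ℝ) ≤ s := by
    rw [hs]
    have : 0 ≤ (2*π) ^ (-q/2) * zetaReal (q/2) :=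
      mul_nonneg (Real.rpow_nonneg (by positivity) _) (zeta_nonneg _)
    linarith
  have hs0 : (0:ℝ) < s := by linarith
  have hBbound : B ≤ s ^ n := by
    have heq : B = ∑ z ∈ F, ∏ i, (aAux (z i)) ^ q := by
      rw [hB]
      exact Finset.sum_congr rfl fun z _ =>
        (Real.finset_prod_rpow _ _ (fun i _ => (aAux_pos _).le) q).symm
    rw [heq, hF]
    calc ∑ z ∈ Finset.Nat.antidiagonalTuple n N, ∏ i, (aAux (z i)) ^ q
        ≤ (∑ k ∈ Finset.range (N+1), (aAux k) ^ q) ^ n :=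
          box_bound (n := n) (N := N) (fun k => (aAux k) ^ q) (fun _ => Real.rpow_nonneg (aAux_pos _).le q)
      _ ≤ s ^ n := by
          apply pow_le_pow_left₀ (Finset.sum_nonneg fun k _ => Real.rpow_nonneg (aAux_pos _).le q)
          exact g_sum_le hq N
  -- combine : A ≤ c^(1-1/q) * (s^n)^(1/q)
  have hAc : A / c ≤ (s ^ n / c) ^ (1/q : ℝ) := by
    have h1 : ((A / c) ^ q) ^ (1/q : ℝ) ≤ (s ^ n / c) ^ (1/q : ℝ) := by
      apply Real.rpow_le_rpow (Real.rpow_nonneg (by positivity) q)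
      · exact le_trans jensen (by gcongr)
      · positivity
    rwa [← Real.rpow_mul (by positivity : (0:ℝ) ≤ A / c), mul_one_div,
      div_self (ne_of_gt hq0), Real.rpow_one] at h1
  -- final combination
  have hq1' : (0:ℝ) ≤ 1 - 1/q := by
    have : 1/q ≤ 1 := by rw [div_le_one hq0]; linarith
    linarith
  have hcard : c ≤ Real.exp (n * Psi r) := by
    rw [hc, hF, hN]; exact card_antidiagonalTuple_le n r hr
  have hA_le : A ≤ (s ^ n) ^ (1/q : ℝ) * c ^ ((1 - 1/q : ℝ)) := by
    have h3 : A ≤ (s ^ n / c) ^ (1/q : ℝ) * c := by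
      have h2 : A = (A/c) * c := by field_simp
      rw [h2]; exact mul_le_mul_of_nonneg_right hAc hc0.le
    calc A ≤ (s ^ n / c) ^ (1/q : ℝ) * c := h3
      _ = (s ^ n) ^ (1/q : ℝ) * c ^ ((1 - 1/q : ℝ)) := by
          rw [Real.div_rpow (by positivity) hc0.le]
          rw [show (1 - 1/q : ℝ) = 1 + (-(1/q)) by ring, Real.rpow_add hc0, Real.rpow_one,
            Real.rpow_neg hc0.le]
          have hcq : c ^ (1/q : ℝ) ≠ 0 := ne_of_gt (Real.rpow_pos_of_pos hc0 _)
          field_simp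
  have hfin1 : c ^ ((1 - 1/q : ℝ)) ≤ Real.exp ((n * Psi r) * (1 - 1/q)) := by
    rw [← exp_rpow']
    exact Real.rpow_le_rpow hc0.le hcard hq1'
  have hfin2 : (s ^ n) ^ (1/q : ℝ) = Real.exp ((n * Real.log s) * (1/q)) := by
    rw [show s ^ n = Real.exp ((n : ℝ) * Real.log s) by
        rw [Real.exp_nat_mul, Real.exp_log hs0]]
    rw [exp_rpow']
  calc A ≤ (s ^ n) ^ (1/q : ℝ) * c ^ ((1 - 1/q : ℝ)) := hA_le
    _ ≤ Real.exp ((n * Real.log s) * (1/q)) * Real.exp ((n * Psi r) * (1 - 1/q)) := by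
        rw [hfin2]
        exact mul_le_mul_of_nonneg_left hfin1 (Real.exp_pos _).le
    _ = Real.exp (n * ((1 - 1/q) * Psi r + (1/q) * Real.log s)) := by
        rw [← Real.exp_add]; congr 1; ring

theorem stmt_16 (n r : ℕ) (hn : 1 ≤ n) (hr : 1 ≤ r)
    (p : Fin n → ℝ) (hp : ∀ i, 0 < p i) (hps : ∑ i, p i = 1) :
    ∑ z ∈ Finset.Nat.antidiagonalTuple n (n * r),
        (((n * r).factorial : ℝ) / ∏ i, ((z i).factorial : ℝ)) * (∏ i, p i ^ z i) *
          ∏ i, ((z i : ℝ) / p i) ^ z i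
      ≤ Real.sqrt (2 * π * Real.exp 1 * (n * r)) * ((n * r : ℝ) ^ (n * r : ℕ)) *
          Real.exp (n * Delta r) := by
  have hN1 : 1 ≤ n * r := Nat.one_le_iff_ne_zero.mpr (by positivity)
  set N := n * r with hN
  set F := Finset.Nat.antidiagonalTuple n N with hF
  set A : ℝ := ∑ z ∈ F, ∏ i, aAux (z i) with hA
  -- Step 1 : rewrite the sum
  have hterm : ∀ z ∈ F, ((N.factorial : ℝ) / ∏ i, ((z i).factorial : ℝ)) *
      (∏ i, p i ^ z i) * (∏ i, ((z i : ℝ) / p i) ^ z i)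
      = (N.factorial : ℝ) * Real.exp N * ∏ i, aAux (z i) := by
    intro z hz
    rw [hF, Finset.Nat.mem_antidiagonalTuple] at hz
    have hfacpos : (0:ℝ) < ∏ i, ((z i).factorial : ℝ) :=
      Finset.prod_pos fun i _ => by positivity
    have e1 : (∏ i, p i ^ z i) * (∏ i, ((z i : ℝ) / p i) ^ z i)
        = ∏ i, ((z i : ℝ)) ^ (z i) := by
      rw [← Finset.prod_mul_distrib]
      refine Finset.prod_congr rfl fun i _ => ?_
      rw [div_pow, mul_comm, div_mul_cancel₀ _ (pow_ne_zero _ (hp i).ne')]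
    have e2 : (∏ i, aAux (z i))
        = (∏ i, ((z i : ℝ)) ^ (z i)) * Real.exp (-(N:ℝ)) / ∏ i, ((z i).factorial : ℝ) := by
      unfold aAux
      rw [Finset.prod_div_distrib, Finset.prod_mul_distrib, ← Real.exp_sum]
      congr 3
      rw [Finset.sum_neg_distrib]
      congr 1
      rw [← hz]
      push_cast
      ring
    have hexp : Real.exp (N:ℝ) * Real.exp (-(N:ℝ)) = 1 := by
      rw [← Real.exp_add]; simp
    rw [mul_assoc, e1, e2]
    field_simp
    rw [mul_assoc, hexp, mul_one]
  have hsum : ∑ z ∈ F, ((N.factorial : ℝ) / ∏ i, ((z i).factorial : ℝ)) *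
      (∏ i, p i ^ z i) * (∏ i, ((z i : ℝ) / p i) ^ z i)
      = (N.factorial : ℝ) * Real.exp N * A := by
    rw [Finset.sum_congr rfl hterm, ← Finset.mul_sum]
  -- Step 2 : A ≤ exp (n * Delta r)
  have hFne : F.Nonempty := by
    refine ⟨fun _ => r, ?_⟩
    rw [hF, Finset.Nat.mem_antidiagonalTuple]
    simp [Finset.sum_const, Finset.card_univ, mul_comm]; rfl
  have hApos : 0 < A :=
    Finset.sum_pos (fun z _ => Finset.prod_pos fun i _ => aAux_pos _) hFne
  have hSne : Set.Nonempty {x : ℝ | ∃ q : ℝ, 2 < q ∧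
      x = (1 - 1/q) * Psi r + (1/q) * Real.log (1 + (2 * π) ^ (-q/2) * zetaReal (q/2))} :=
    ⟨_, 3, by norm_num, rfl⟩
  have hlb : ∀ x ∈ {x : ℝ | ∃ q : ℝ, 2 < q ∧
      x = (1 - 1/q) * Psi r + (1/q) * Real.log (1 + (2 * π) ^ (-q/2) * zetaReal (q/2))},
      Real.log A / n ≤ x := by
    rintro x ⟨q, hq, rfl⟩
    have h := main_q n r hn hr hq
    rw [← hF, ← hA] at h
    have hlog : Real.log A ≤ (n:ℝ) * ((1 - 1/q) * Psi r
        + (1/q) * Real.log (1 + (2*π) ^ (-q/2) * zetaReal (q/2))) :=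
      (Real.log_le_iff_le_exp hApos).mpr h
    rw [div_le_iff₀ (by exact_mod_cast Nat.pos_of_ne_zero (by omega) : (0:ℝ) < (n:ℝ))]
    linarith
  have hDelta : Real.log A / n ≤ Delta r := le_csInf hSne hlb
  have hALe : A ≤ Real.exp (n * Delta r) := by
    rw [← Real.exp_log hApos]
    apply Real.exp_le_exp.mpr
    rw [div_le_iff₀ (by exact_mod_cast Nat.pos_of_ne_zero (by omega) : (0:ℝ) < (n:ℝ))] at hDelta
    linarith
  -- Step 3 : Stirling bound
  have hfacbound : (N.factorial : ℝ) * Real.exp N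
      ≤ Real.sqrt (2 * π * Real.exp 1 * N) * (N:ℝ) ^ N := by
    obtain ⟨M, hM⟩ : ∃ M, N = M + 1 := ⟨N - 1, by omega⟩
    rw [hM]
    have h1 := factorial_stirling_upper M
    have h2 : (((M+1:ℕ):ℝ) / exp 1) ^ (M+1) * Real.exp ((M+1:ℕ):ℝ) = ((M+1:ℕ):ℝ) ^ (M+1) := by
      rw [div_pow, ← Real.exp_nat_mul, mul_one, div_mul_cancel₀ _ (Real.exp_ne_zero _)]
    have h3 : ((M+1).factorial : ℝ) * Real.exp ((M+1:ℕ):ℝ)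
        ≤ exp 1 * Real.sqrt ((M:ℝ)+1) * ((M+1:ℕ):ℝ) ^ (M+1) := by
      rw [← h2]
      have hexpN : (0:ℝ) < Real.exp ((M+1:ℕ):ℝ) := Real.exp_pos _
      calc ((M+1).factorial : ℝ) * Real.exp ((M+1:ℕ):ℝ)
          ≤ (exp 1 * Real.sqrt ((M:ℝ)+1) * (((M:ℝ)+1) / exp 1) ^ (M+1)) * Real.exp ((M+1:ℕ):ℝ) :=
            mul_le_mul_of_nonneg_right h1 hexpN.le
        _ = exp 1 * Real.sqrt ((M:ℝ)+1) * ((((M+1:ℕ):ℝ)) / exp 1) ^ (M+1) * Real.exp ((M+1:ℕ):ℝ) := by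
            push_cast; ring
        _ = exp 1 * Real.sqrt ((M:ℝ)+1) * (((((M+1:ℕ):ℝ)) / exp 1) ^ (M+1) * Real.exp ((M+1:ℕ):ℝ)) := by
            ring
    have h4 : exp 1 * Real.sqrt ((M:ℝ)+1) ≤ Real.sqrt (2 * π * Real.exp 1 * ((M+1:ℕ):ℝ)) := by
      have hsplit : Real.sqrt (2 * π * Real.exp 1 * ((M+1:ℕ):ℝ))
          = Real.sqrt (2 * π * Real.exp 1) * Real.sqrt ((M:ℝ)+1) := by
        rw [← Real.sqrt_mul (by positivity)]
        push_cast
        ring_nf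
      rw [hsplit]
      apply mul_le_mul_of_nonneg_right _ (Real.sqrt_nonneg _)
      rw [Real.le_sqrt (Real.exp_pos 1).le (by positivity)]
      nlinarith [pi_gt_three, Real.exp_one_lt_d9, Real.exp_pos 1]
    calc ((M+1).factorial : ℝ) * Real.exp ((M+1:ℕ):ℝ)
        ≤ exp 1 * Real.sqrt ((M:ℝ)+1) * ((M+1:ℕ):ℝ) ^ (M+1) := h3
      _ ≤ Real.sqrt (2 * π * Real.exp 1 * ((M+1:ℕ):ℝ)) * ((M+1:ℕ):ℝ) ^ (M+1) :=
          mul_le_mul_of_nonneg_right h4 (by positivity)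
  -- Final combination
  rw [show ∑ z ∈ Finset.Nat.antidiagonalTuple n (n*r),
      (((n * r).factorial : ℝ) / ∏ i, ((z i).factorial : ℝ)) * (∏ i, p i ^ z i) *
        ∏ i, ((z i : ℝ) / p i) ^ z i = (N.factorial : ℝ) * Real.exp N * A from hsum]
  calc (N.factorial : ℝ) * Real.exp N * A
      ≤ (Real.sqrt (2 * π * Real.exp 1 * N) * (N:ℝ) ^ N) * Real.exp (n * Delta r) := by
        apply mul_le_mul hfacbound hALe hApos.le (by positivity)
    _ = Real.sqrt (2 * π * Real.exp 1 * ((n:ℝ) * r)) * (((n:ℝ) * r) ^ (n * r : ℕ)) *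
          Real.exp (n * Delta r) := by
        rw [hN]; push_cast; ring
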